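/- Let α be a finite set with |α| = q, let f₊ and f₋ be pmfs on α with H(f₊‖f₋) > 0, and let M ≥ 1 be a natural number. Let A be the empirical distribution of M i.i.d. samples from f₋, and let B, C, D each be the empirical distribution of M i.i.d. samples from f₊, where all four samples are mutually independent (i.e., the underlying law is the product of the corresponding product pmfs). Then Pr( H(A‖B) ≤ H(C‖D) ) ≤ 4·(M+1)^{q} · exp(−M·H²(f₊‖f₋)/32). -/

import Mathlib

open Finset

/-- `p` is a probability mass function on the finite type `α`. -/
def IsPmf {α : Type*} [Fintype α] (p : α → ℝ) : Prop :=
  (∀ a, 0 ≤ p a) ∧ ∑ a, p a = 1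

/-- Squared Hellinger divergence between pmfs on a finite type. -/
noncomputable def hellingerSq {α : Type*} [Fintype α] (p q : α → ℝ) : ℝ :=
  (1 / 2) * ∑ a, (Real.sqrt (p a) - Real.sqrt (q a)) ^ 2

/-- Hellinger distance between pmfs on a finite type. -/
noncomputable def hellinger {α : Type*} [Fintype α] (p q : α → ℝ) : ℝ :=
  Real.sqrt (hellingerSq p q)

/-- Empirical distribution of the sample `x = (x₁, …, x_M)`. -/
noncomputable def empDist {α : Type*} [Fintype α] [DecidableEq α] {M : ℕ}
    (x : Fin M → α) (a : α) : ℝ :=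
  ((Finset.univ.filter fun i => x i = a).card : ℝ) / M

section Aux
variable {α : Type*} [Fintype α] [DecidableEq α]

lemma hellingerSq_nonneg (p q : α → ℝ) : 0 ≤ hellingerSq p q := by
  unfold hellingerSq; positivity

lemma hellinger_nonneg (p q : α → ℝ) : 0 ≤ hellinger p q := Real.sqrt_nonneg _

lemma sq_hellinger (p q : α → ℝ) : hellinger p q ^ 2 = hellingerSq p q :=
  Real.sq_sqrt (hellingerSq_nonneg p q)

lemma hellingerSq_comm (p q : α → ℝ) : hellingerSq p q = hellingerSq q p := by
  unfold hellingerSq; congr 1; exact Finset.sum_congr rfl fun a _ => by ring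

lemma hellinger_comm (p q : α → ℝ) : hellinger p q = hellinger q p := by
  unfold hellinger; rw [hellingerSq_comm]

noncomputable def sqVec (p : α → ℝ) : EuclideanSpace ℝ α := WithLp.toLp 2 (fun a => Real.sqrt (p a))

lemma hellinger_eq_dist (p q : α → ℝ) :
    hellinger p q = dist (sqVec p) (sqVec q) / Real.sqrt 2 := by
  rw [EuclideanSpace.dist_eq, ← Real.sqrt_div (by positivity)]
  unfold hellinger hellingerSq
  congr 1
  rw [eq_div_iff (by norm_num : (2:ℝ) ≠ 0)]
  rw [show (∑ i : α, dist (sqVec p i) (sqVec q i) ^ 2) =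
      ∑ a : α, (Real.sqrt (p a) - Real.sqrt (q a)) ^ 2 from
    Finset.sum_congr rfl fun a _ => by rw [Real.dist_eq, sq_abs]; rfl]
  ring

lemma hellinger_triangle (p q r : α → ℝ) :
    hellinger p r ≤ hellinger p q + hellinger q r := by
  rw [hellinger_eq_dist, hellinger_eq_dist, hellinger_eq_dist, ← add_div]
  have h2 : (0:ℝ) < Real.sqrt 2 := Real.sqrt_pos.mpr (by norm_num)
  exact div_le_div_of_nonneg_right (dist_triangle _ _ _) h2.le |>.trans_eq rfl

end Aux

section Conc
variable {α : Type*} [Fintype α] [DecidableEq α]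

lemma sum_prod_pmf (p : α → ℝ) (hp : IsPmf p) (M : ℕ) :
    ∑ x : Fin M → α, ∏ i, p (x i) = 1 := by
  rw [← Fintype.piFinset_univ, ← Finset.prod_univ_sum (fun _ => (univ : Finset α))
    (fun _ a => p a)]
  simp [hp.2]

lemma sum_count (M : ℕ) (x : Fin M → α) :
    ∑ a, (univ.filter fun i => x i = a).card = M := by
  rw [← Finset.card_eq_sum_card_fiberwise (f := x) (t := univ) (fun i _ => mem_univ _),
    Finset.card_univ, Fintype.card_fin]

lemma empDist_isPmf {M : ℕ} (hM : 1 ≤ M) (x : Fin M → α) : IsPmf (empDist x) := by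
  have hM0 : (M:ℝ) ≠ 0 := Nat.cast_ne_zero.mpr (by omega)
  constructor
  · intro a; unfold empDist; positivity
  · unfold empDist
    rw [← Finset.sum_div, div_eq_one_iff_eq hM0]
    exact_mod_cast sum_count M x

lemma prod_eq_prod_pow {M : ℕ} (p : α → ℝ) (x : Fin M → α) :
    ∏ i, p (x i) = ∏ a, p a ^ (univ.filter fun i => x i = a).card := by
  rw [← Finset.prod_fiberwise_of_maps_to (g := x) (t := univ) (fun i _ => mem_univ _)
    (fun i => p (x i))]
  exact Finset.prod_congr rfl fun a _ => by
    rw [Finset.prod_congr rfl (fun i hi => by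
      rw [(Finset.mem_filter.mp hi).2]), Finset.prod_const]

lemma hellingerSq_eq_one_sub (p q : α → ℝ) (hp : IsPmf p) (hq : IsPmf q) :
    hellingerSq p q = 1 - ∑ a, Real.sqrt (p a * q a) := by
  unfold hellingerSq
  have : ∀ a ∈ (univ : Finset α), (Real.sqrt (p a) - Real.sqrt (q a)) ^ 2
      = p a + q a - 2 * Real.sqrt (p a * q a) := fun a _ => by
    rw [sub_sq, Real.sq_sqrt (hp.1 a), Real.sq_sqrt (hq.1 a),
      Real.sqrt_mul (hp.1 a)]
    ring
  rw [Finset.sum_congr rfl this]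
  rw [Finset.sum_sub_distrib, Finset.sum_add_distrib, hp.2, hq.2, ← Finset.mul_sum]
  ring

lemma pow_le_aux {M : ℕ} (hM : 0 < M) (pa : ℝ) (hpa : 0 ≤ pa) (c : ℕ) (hc : c ≤ M) :
    pa ^ c ≤ ((c : ℝ) / M) ^ c *
      Real.exp (2 * ((M : ℝ) * Real.sqrt (pa * ((c : ℝ) / M)) - c)) := by
  rcases Nat.eq_zero_or_pos c with hc0 | hc0
  · subst hc0; simp
  set qa : ℝ := (c : ℝ) / M with hq
  have hqa : (0:ℝ) < qa := by positivity
  rcases eq_or_lt_of_le hpa with hpa0 | hpa0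
  · rw [← hpa0, zero_pow (by omega)]
    positivity
  have hMq : (c : ℝ) = M * qa := by
    rw [hq]; field_simp
  have h1 : pa ^ c = qa ^ c * (pa / qa) ^ c := by
    rw [div_pow pa qa c, mul_div_assoc', mul_div_cancel_left₀ _ (pow_ne_zero _ hqa.ne')]
  have h2 : (pa / qa) ^ c = Real.exp ((c : ℝ) * Real.log (pa / qa)) := by
    rw [Real.exp_nat_mul, Real.exp_log (by positivity : (0:ℝ) < pa / qa)]
  have h3 : Real.log (pa / qa) ≤ 2 * (Real.sqrt (pa / qa) - 1) := by
    have h := Real.log_le_sub_one_of_pos (x := Real.sqrt (pa / qa)) (by positivity)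
    have h' := Real.log_sqrt (by positivity : (0:ℝ) ≤ pa / qa)
    linarith
  have h4 : (c : ℝ) * Real.sqrt (pa / qa) = M * Real.sqrt (pa * qa) := by
    rw [Real.sqrt_div hpa, Real.sqrt_mul hpa]
    calc (c:ℝ) * (Real.sqrt pa / Real.sqrt qa)
        = (M : ℝ) * Real.sqrt pa * (qa / Real.sqrt qa) := by rw [hMq]; ring
      _ = (M : ℝ) * (Real.sqrt pa * Real.sqrt qa) := by rw [Real.div_sqrt]; ring
  calc pa ^ c = qa ^ c * Real.exp ((c : ℝ) * Real.log (pa / qa)) := by rw [h1, h2]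
    _ ≤ qa ^ c * Real.exp (2 * ((M : ℝ) * Real.sqrt (pa * qa) - c)) := by
        apply mul_le_mul_of_nonneg_left _ (pow_nonneg hqa.le c)
        apply Real.exp_le_exp.mpr
        calc (c : ℝ) * Real.log (pa / qa)
            ≤ (c : ℝ) * (2 * (Real.sqrt (pa / qa) - 1)) :=
              mul_le_mul_of_nonneg_left h3 (by positivity)
          _ = 2 * ((c : ℝ) * Real.sqrt (pa / qa) - c) := by ring
          _ = 2 * ((M : ℝ) * Real.sqrt (pa * qa) - c) := by rw [h4]

lemma concentration (p : α → ℝ) (hp : IsPmf p) {M : ℕ} (hM : 1 ≤ M) (s : ℝ) :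
    ∑ x : Fin M → α, (if s ≤ hellingerSq (empDist x) p then ∏ i, p (x i) else 0)
      ≤ ((M : ℝ) + 1) ^ (Fintype.card α) * Real.exp (-(2 * M * s)) := by
  classical
  have hMpos : 0 < M := hM
  set F : (Fin M → α) → ℝ :=
    fun x => if s ≤ hellingerSq (empDist x) p then ∏ i, p (x i) else 0 with hF
  have hcard_le : ∀ (x : Fin M → α) (a : α), (univ.filter fun i => x i = a).card < M + 1 := by
    intro x a
    have := Finset.card_filter_le (univ : Finset (Fin M)) (fun i => x i = a)
    simp only [Finset.card_univ, Fintype.card_fin] at this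
    omega
  set cnt : (Fin M → α) → (α → Fin (M + 1)) :=
    fun x a => ⟨(univ.filter fun i => x i = a).card, hcard_le x a⟩ with hcnt
  rw [← Finset.sum_fiberwise_of_maps_to (g := cnt) (t := univ) (fun x _ => mem_univ _) F]
  have fiber_bound : ∀ c ∈ (univ : Finset (α → Fin (M + 1))),
      ∑ x ∈ univ.filter (fun x => cnt x = c), F x ≤ Real.exp (-(2 * M * s)) := by
    intro c _
    rcases (univ.filter (fun x => cnt x = c)).eq_empty_or_nonempty with he | ⟨x0, hx0⟩
    · rw [he, Finset.sum_empty]; positivity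
    have hcount : ∀ x ∈ univ.filter (fun x => cnt x = c), ∀ a,
        (univ.filter fun i => x i = a).card = (univ.filter fun i => x0 i = a).card := by
      intro x hx a
      have h1 : cnt x = c := (Finset.mem_filter.mp hx).2
      have h2 : cnt x0 = c := (Finset.mem_filter.mp hx0).2
      have := congrFun (h1.trans h2.symm) a
      simpa [hcnt, Fin.ext_iff] using this
    have hemp : ∀ x ∈ univ.filter (fun x => cnt x = c), empDist x = empDist x0 := by
      intro x hx
      funext a
      unfold empDist
      rw [hcount x hx a]
    have hprodeq : ∀ (r : α → ℝ), ∀ x ∈ univ.filter (fun x => cnt x = c),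
        ∏ i, r (x i) = ∏ i, r (x0 i) := by
      intro r x hx
      rw [prod_eq_prod_pow, prod_eq_prod_pow]
      exact Finset.prod_congr rfl fun a _ => by rw [hcount x hx a]
    have hFeq : ∀ x ∈ univ.filter (fun x => cnt x = c), F x = F x0 := by
      intro x hx
      rw [hF]
      simp only
      rw [hemp x hx, hprodeq p x hx]
    rw [Finset.sum_congr rfl hFeq, Finset.sum_const, nsmul_eq_mul]
    set N : ℕ := (univ.filter (fun x => cnt x = c)).card with hN
    by_cases hcond : s ≤ hellingerSq (empDist x0) p
    · have hFx0 : F x0 = ∏ i, p (x0 i) := by rw [hF]; simp only [if_pos hcond]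
      rw [hFx0]
      set q0 : α → ℝ := empDist x0 with hq0
      have hq0pmf : IsPmf q0 := empDist_isPmf hM x0
      -- Step A : N * ∏ q0 ≤ 1
      have stepA : (N : ℝ) * ∏ i, q0 (x0 i) ≤ 1 := by
        have h1 : ∑ x ∈ univ.filter (fun x => cnt x = c), ∏ i, q0 (x i)
            ≤ ∑ x : Fin M → α, ∏ i, q0 (x i) := by
          apply Finset.sum_le_sum_of_subset_of_nonneg (Finset.filter_subset _ _)
          intro x _ _
          exact Finset.prod_nonneg fun i _ => hq0pmf.1 _
        rw [sum_prod_pmf q0 hq0pmf] at h1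
        rw [Finset.sum_congr rfl (hprodeq q0), Finset.sum_const, nsmul_eq_mul] at h1
        exact h1
      -- Step B : ∏ p ≤ ∏ q0 * exp(-2M * H²)
      have hq0a : ∀ a, q0 a = ((univ.filter fun i => x0 i = a).card : ℝ) / M := fun a => rfl
      have stepB : ∏ i, p (x0 i) ≤ (∏ i, q0 (x0 i)) *
          Real.exp (-(2 * M * hellingerSq q0 p)) := by
        rw [prod_eq_prod_pow p x0, prod_eq_prod_pow q0 x0]
        have perA : ∀ a ∈ (univ : Finset α),
            p a ^ (univ.filter fun i => x0 i = a).card ≤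
              q0 a ^ (univ.filter fun i => x0 i = a).card *
                Real.exp (2 * ((M : ℝ) * Real.sqrt (p a * q0 a)
                  - ((univ.filter fun i => x0 i = a).card : ℝ))) := by
          intro a _
          have := pow_le_aux hMpos (p a) (hp.1 a) ((univ.filter fun i => x0 i = a).card)
            (by have := hcard_le x0 a; omega)
          rw [hq0a a]
          exact this
        calc ∏ a, p a ^ (univ.filter fun i => x0 i = a).card
            ≤ ∏ a, (q0 a ^ (univ.filter fun i => x0 i = a).card *
                Real.exp (2 * ((M : ℝ) * Real.sqrt (p a * q0 a)
                  - ((univ.filter fun i => x0 i = a).card : ℝ)))) := by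
              apply Finset.prod_le_prod (fun a _ => pow_nonneg (hp.1 a) _) perA
          _ = (∏ a, q0 a ^ (univ.filter fun i => x0 i = a).card) *
                Real.exp (∑ a, 2 * ((M : ℝ) * Real.sqrt (p a * q0 a)
                  - ((univ.filter fun i => x0 i = a).card : ℝ))) := by
              rw [Finset.prod_mul_distrib, Real.exp_sum]
          _ = (∏ a, q0 a ^ (univ.filter fun i => x0 i = a).card) *
                Real.exp (-(2 * M * hellingerSq q0 p)) := by
              congr 1
              have hsum : ∑ a : α, ((univ.filter fun i => x0 i = a).card : ℝ) = (M : ℝ) := by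
                exact_mod_cast sum_count M x0
              have hH : hellingerSq q0 p = 1 - ∑ a : α, Real.sqrt (q0 a * p a) :=
                hellingerSq_eq_one_sub q0 p hq0pmf hp
              have hterm : ∀ a ∈ (univ : Finset α),
                  2 * ((M : ℝ) * Real.sqrt (p a * q0 a)
                    - ((univ.filter fun i => x0 i = a).card : ℝ))
                  = 2 * (M : ℝ) * Real.sqrt (q0 a * p a)
                    - 2 * ((univ.filter fun i => x0 i = a).card : ℝ) := fun a _ => by
                rw [mul_comm (p a) (q0 a)]; ring
              rw [Finset.sum_congr rfl hterm, Finset.sum_sub_distrib, ← Finset.mul_sum,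
                ← Finset.mul_sum, hsum, hH]
              ring
      calc (N : ℝ) * ∏ i, p (x0 i)
          ≤ (N : ℝ) * ((∏ i, q0 (x0 i)) * Real.exp (-(2 * M * hellingerSq q0 p))) := by
            apply mul_le_mul_of_nonneg_left stepB (Nat.cast_nonneg N)
        _ = ((N : ℝ) * ∏ i, q0 (x0 i)) * Real.exp (-(2 * M * hellingerSq q0 p)) := by ring
        _ ≤ 1 * Real.exp (-(2 * M * hellingerSq q0 p)) := by
            apply mul_le_mul_of_nonneg_right stepA (Real.exp_nonneg _)
        _ ≤ Real.exp (-(2 * M * s)) := by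
            rw [one_mul]
            apply Real.exp_le_exp.mpr
            have : (0:ℝ) ≤ 2 * M := by positivity
            nlinarith
    · have hFx0 : F x0 = 0 := by rw [hF]; simp only [if_neg hcond]
      rw [hFx0, mul_zero]
      positivity
  calc ∑ c : α → Fin (M + 1), ∑ x ∈ univ.filter (fun x => cnt x = c), F x
      ≤ ∑ _c : α → Fin (M + 1), Real.exp (-(2 * M * s)) :=
        Finset.sum_le_sum fiber_bound
    _ = (Fintype.card (α → Fin (M + 1)) : ℝ) * Real.exp (-(2 * M * s)) := by
        rw [Finset.sum_const, nsmul_eq_mul, Finset.card_univ]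
    _ = ((M : ℝ) + 1) ^ (Fintype.card α) * Real.exp (-(2 * M * s)) := by
        rw [Fintype.card_fun, Fintype.card_fin]
        push_cast
        ring

end Conc

section Main
variable {α : Type*} [Fintype α] [DecidableEq α]

lemma sum4 {M : ℕ} (g1 g2 g3 g4 : (Fin M → α) → ℝ) :
    ∑ w : Fin M → α, ∑ x : Fin M → α, ∑ y : Fin M → α, ∑ z : Fin M → α,
      g1 w * g2 x * g3 y * g4 z
      = (∑ w, g1 w) * (∑ x, g2 x) * (∑ y, g3 y) * (∑ z, g4 z) := by
  simp only [← Finset.sum_mul, ← Finset.mul_sum]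

lemma union4 {A B C D c1 c2 c3 c4 : ℝ} (hA : 0 ≤ A) (hB : 0 ≤ B) (hC : 0 ≤ C) (hD : 0 ≤ D)
    (h1 : 0 ≤ c1) (h2 : 0 ≤ c2) (h3 : 0 ≤ c3) (h4 : 0 ≤ c4)
    (hone : 1 ≤ c1 ∨ 1 ≤ c2 ∨ 1 ≤ c3 ∨ 1 ≤ c4) :
    A * B * C * D ≤ (c1 * A) * B * C * D + A * (c2 * B) * C * D
      + A * B * (c3 * C) * D + A * B * C * (c4 * D) := by
  have k1 : 0 ≤ (c1 * A) * B * C * D := by positivity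
  have k2 : 0 ≤ A * (c2 * B) * C * D := by positivity
  have k3 : 0 ≤ A * B * (c3 * C) * D := by positivity
  have k4 : 0 ≤ A * B * C * (c4 * D) := by positivity
  rcases hone with h | h | h | h
  · have : A * B * C * D ≤ (c1 * A) * B * C * D := by
      have hAA : A ≤ c1 * A := le_mul_of_one_le_left hA h
      gcongr
    linarith
  · have : A * B * C * D ≤ A * (c2 * B) * C * D := by
      have hBB : B ≤ c2 * B := le_mul_of_one_le_left hB h
      gcongr
    linarith
  · have : A * B * C * D ≤ A * B * (c3 * C) * D := by
      have hCC : C ≤ c3 * C := le_mul_of_one_le_left hC h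
      gcongr
    linarith
  · have : A * B * C * D ≤ A * B * C * (c4 * D) := by
      have hDD : D ≤ c4 * D := le_mul_of_one_le_left hD h
      gcongr
    linarith

end Main

/-- Probabilistic core of the membership lemma: let `A` be the empirical distribution of
`M` i.i.d. samples from `f₋` and let `B, C, D` each be the empirical distribution of `M`
i.i.d. samples from `f₊`, all four samples mutually independent (so the underlying law is
the product of the corresponding product pmfs on `α^M`). Then
`Pr(H(A‖B) ≤ H(C‖D)) ≤ 4·(M+1)^{|α|} · exp(−M·H²(f₊‖f₋)/32)`. -/
theorem prob_membership_swap {α : Type*} [Fintype α] [DecidableEq α]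
    (fP fM : α → ℝ) (hfP : IsPmf fP) (hfM : IsPmf fM)
    (hH : 0 < hellinger fP fM) (M : ℕ) (hM : 1 ≤ M) :
    (∑ w : Fin M → α, ∑ x : Fin M → α, ∑ y : Fin M → α, ∑ z : Fin M → α,
        Set.indicator
          {t : (Fin M → α) × (Fin M → α) × (Fin M → α) × (Fin M → α) |
            hellinger (empDist t.1) (empDist t.2.1) ≤
              hellinger (empDist t.2.2.1) (empDist t.2.2.2)}
          (fun t => (∏ i, fM (t.1 i)) * (∏ i, fP (t.2.1 i)) *
            (∏ i, fP (t.2.2.1 i)) * (∏ i, fP (t.2.2.2 i)))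
          (w, x, y, z)) ≤
      4 * ((M : ℝ) + 1) ^ (Fintype.card α) *
        Real.exp (-(M : ℝ) * hellingerSq fP fM / 32) := by
  classical
  set h : ℝ := hellinger fP fM with hh
  set s : ℝ := hellingerSq fP fM / 16 with hs
  set χ : (α → ℝ) → (Fin M → α) → ℝ :=
    fun p u => if s ≤ hellingerSq (empDist u) p then 1 else 0 with hχ
  have hχ01 : ∀ p u, 0 ≤ χ p u := fun p u => by
    rw [hχ]; dsimp only; split <;> norm_num
  have hχ1 : ∀ p u, s ≤ hellingerSq (empDist u) p → (1:ℝ) ≤ χ p u := fun p u hc => by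
    rw [hχ]; dsimp only; rw [if_pos hc]
  -- not-large hellingerSq implies small hellinger
  have hsmall : ∀ (u : Fin M → α) (p : α → ℝ), ¬ s ≤ hellingerSq (empDist u) p →
      hellinger (empDist u) p < h / 4 := by
    intro u p hc
    by_contra hcon
    push_neg at hcon
    apply hc
    calc s = (h / 4) ^ 2 := by
          rw [hs, hh, div_pow, sq_hellinger]; norm_num
      _ ≤ hellinger (empDist u) p ^ 2 :=
          pow_le_pow_left₀ (by positivity) hcon 2
      _ = hellingerSq (empDist u) p := sq_hellinger _ _
  -- pointwise union bound
  have key : ∀ w x y z : Fin M → α,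
      Set.indicator
        {t : (Fin M → α) × (Fin M → α) × (Fin M → α) × (Fin M → α) |
          hellinger (empDist t.1) (empDist t.2.1) ≤
            hellinger (empDist t.2.2.1) (empDist t.2.2.2)}
        (fun t => (∏ i, fM (t.1 i)) * (∏ i, fP (t.2.1 i)) *
          (∏ i, fP (t.2.2.1 i)) * (∏ i, fP (t.2.2.2 i)))
        (w, x, y, z) ≤
      (χ fM w * ∏ i, fM (w i)) * (∏ i, fP (x i)) * (∏ i, fP (y i)) * (∏ i, fP (z i))
      + (∏ i, fM (w i)) * (χ fP x * ∏ i, fP (x i)) * (∏ i, fP (y i)) * (∏ i, fP (z i))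
      + (∏ i, fM (w i)) * (∏ i, fP (x i)) * (χ fP y * ∏ i, fP (y i)) * (∏ i, fP (z i))
      + (∏ i, fM (w i)) * (∏ i, fP (x i)) * (∏ i, fP (y i)) * (χ fP z * ∏ i, fP (z i)) := by
    intro w x y z
    have hA : 0 ≤ ∏ i, fM (w i) := Finset.prod_nonneg fun i _ => hfM.1 _
    have hB : 0 ≤ ∏ i, fP (x i) := Finset.prod_nonneg fun i _ => hfP.1 _
    have hC : 0 ≤ ∏ i, fP (y i) := Finset.prod_nonneg fun i _ => hfP.1 _
    have hD : 0 ≤ ∏ i, fP (z i) := Finset.prod_nonneg fun i _ => hfP.1 _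
    by_cases hmem : hellinger (empDist w) (empDist x) ≤
        hellinger (empDist y) (empDist z)
    · rw [Set.indicator_of_mem (by exact hmem)]
      dsimp only
      apply union4 hA hB hC hD (hχ01 _ _) (hχ01 _ _) (hχ01 _ _) (hχ01 _ _)
      -- at least one empirical distance is large
      by_contra hcon
      push_neg at hcon
      obtain ⟨h1, h2, h3, h4⟩ := hcon
      have l1 : hellinger (empDist w) fM < h / 4 := by
        apply hsmall; intro hc; exact absurd (hχ1 _ _ hc) (by linarith)
      have l2 : hellinger (empDist x) fP < h / 4 := by
        apply hsmall; intro hc; exact absurd (hχ1 _ _ hc) (by linarith)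
      have l3 : hellinger (empDist y) fP < h / 4 := by
        apply hsmall; intro hc; exact absurd (hχ1 _ _ hc) (by linarith)
      have l4 : hellinger (empDist z) fP < h / 4 := by
        apply hsmall; intro hc; exact absurd (hχ1 _ _ hc) (by linarith)
      have t1 : h ≤ hellinger fP (empDist x) + hellinger (empDist x) (empDist w)
          + hellinger (empDist w) fM := by
        calc h = hellinger fP fM := hh
          _ ≤ hellinger fP (empDist w) + hellinger (empDist w) fM :=
              hellinger_triangle _ _ _
          _ ≤ (hellinger fP (empDist x) + hellinger (empDist x) (empDist w))
              + hellinger (empDist w) fM := by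
              have := hellinger_triangle fP (empDist x) (empDist w)
              linarith
      have t2 : hellinger (empDist y) (empDist z) ≤
          hellinger (empDist y) fP + hellinger fP (empDist z) :=
        hellinger_triangle _ _ _
      have c1 : hellinger fP (empDist x) = hellinger (empDist x) fP :=
        hellinger_comm _ _
      have c2 : hellinger (empDist x) (empDist w) = hellinger (empDist w) (empDist x) :=
        hellinger_comm _ _
      have c3 : hellinger fP (empDist z) = hellinger (empDist z) fP :=
        hellinger_comm _ _
      linarith
    · rw [Set.indicator_of_notMem (by exact hmem)]
      have e1 : 0 ≤ (χ fM w * ∏ i, fM (w i)) * (∏ i, fP (x i)) * (∏ i, fP (y i))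
          * (∏ i, fP (z i)) := by
        have := hχ01 fM w; positivity
      have e2 : 0 ≤ (∏ i, fM (w i)) * (χ fP x * ∏ i, fP (x i)) * (∏ i, fP (y i))
          * (∏ i, fP (z i)) := by
        have := hχ01 fP x; positivity
      have e3 : 0 ≤ (∏ i, fM (w i)) * (∏ i, fP (x i)) * (χ fP y * ∏ i, fP (y i))
          * (∏ i, fP (z i)) := by
        have := hχ01 fP y; positivity
      have e4 : 0 ≤ (∏ i, fM (w i)) * (∏ i, fP (x i)) * (∏ i, fP (y i))
          * (χ fP z * ∏ i, fP (z i)) := by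
        have := hχ01 fP z; positivity
      linarith
  -- sum the pointwise bound
  have conc : ∀ (p : α → ℝ), IsPmf p →
      ∑ u : Fin M → α, χ p u * ∏ i, p (u i)
        ≤ ((M : ℝ) + 1) ^ (Fintype.card α) * Real.exp (-(2 * M * s)) := by
    intro p hp
    have := concentration p hp hM s
    calc ∑ u : Fin M → α, χ p u * ∏ i, p (u i)
        = ∑ u : Fin M → α, (if s ≤ hellingerSq (empDist u) p then ∏ i, p (u i) else 0) := by
          apply Finset.sum_congr rfl
          intro u _
          rw [hχ]; dsimp only; rw [ite_mul, one_mul, zero_mul]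
      _ ≤ _ := this
  have hsum_fM : ∑ u : Fin M → α, ∏ i, fM (u i) = 1 := sum_prod_pmf fM hfM M
  have hsum_fP : ∑ u : Fin M → α, ∏ i, fP (u i) = 1 := sum_prod_pmf fP hfP M
  set B : ℝ := ((M : ℝ) + 1) ^ (Fintype.card α) * Real.exp (-(2 * M * s)) with hB
  calc (∑ w : Fin M → α, ∑ x : Fin M → α, ∑ y : Fin M → α, ∑ z : Fin M → α,
        Set.indicator _ _ (w, x, y, z))
      ≤ ∑ w : Fin M → α, ∑ x : Fin M → α, ∑ y : Fin M → α, ∑ z : Fin M → α,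
        ((χ fM w * ∏ i, fM (w i)) * (∏ i, fP (x i)) * (∏ i, fP (y i)) * (∏ i, fP (z i))
        + (∏ i, fM (w i)) * (χ fP x * ∏ i, fP (x i)) * (∏ i, fP (y i)) * (∏ i, fP (z i))
        + (∏ i, fM (w i)) * (∏ i, fP (x i)) * (χ fP y * ∏ i, fP (y i)) * (∏ i, fP (z i))
        + (∏ i, fM (w i)) * (∏ i, fP (x i)) * (∏ i, fP (y i)) * (χ fP z * ∏ i, fP (z i))) := by
        apply Finset.sum_le_sum; intro w _
        apply Finset.sum_le_sum; intro x _
        apply Finset.sum_le_sum; intro y _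
        apply Finset.sum_le_sum; intro z _
        exact key w x y z
    _ = (∑ u : Fin M → α, χ fM u * ∏ i, fM (u i)) * 1 * 1 * 1
        + 1 * (∑ u : Fin M → α, χ fP u * ∏ i, fP (u i)) * 1 * 1
        + 1 * 1 * (∑ u : Fin M → α, χ fP u * ∏ i, fP (u i)) * 1
        + 1 * 1 * 1 * (∑ u : Fin M → α, χ fP u * ∏ i, fP (u i)) := by
        simp only [Finset.sum_add_distrib]
        rw [sum4, sum4, sum4, sum4, hsum_fM, hsum_fP]
    _ ≤ B * 1 * 1 * 1 + 1 * B * 1 * 1 + 1 * 1 * B * 1 + 1 * 1 * 1 * B := by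
        have b1 := conc fM hfM
        have b2 := conc fP hfP
        have hB0 : (0:ℝ) ≤ B := by rw [hB]; positivity
        have h1 : 0 ≤ ∑ u : Fin M → α, χ fM u * ∏ i, fM (u i) :=
          Finset.sum_nonneg fun u _ => mul_nonneg (hχ01 _ _)
            (Finset.prod_nonneg fun i _ => hfM.1 _)
        gcongr <;> simp_all
    _ = 4 * ((M : ℝ) + 1) ^ (Fintype.card α) * Real.exp (-(2 * M * s)) := by
        rw [hB]; ring
    _ ≤ 4 * ((M : ℝ) + 1) ^ (Fintype.card α) *
        Real.exp (-(M : ℝ) * hellingerSq fP fM / 32) := by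
        apply mul_le_mul_of_nonneg_left _ (by positivity)
        apply Real.exp_le_exp.mpr
        rw [hs]
        have hnn : 0 ≤ hellingerSq fP fM := hellingerSq_nonneg _ _
        have hMn : (0:ℝ) ≤ M := Nat.cast_nonneg M
        nlinarith
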